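/- arXiv:1710.08296 — 2 statements merged into one kernel-verified Lean document; each statement's English description precedes it below -/
import Mathlib

section
/- Let G be an acyclic directed graph and let (u₁,v₁), (u₂,v₂) be two edges such that adding both to G creates a cycle, but adding either one alone keeps the graph acyclic. Then in G there is a path from v₁ to u₂ and a path from v₂ to u₁. -/
private lemma decomp_edge {V : Type*} {R R' : V → V → Prop} {u v : V}
    (hsub : ∀ x y, R' x y → R x y ∨ (x = u ∧ y = v)) :
    ∀ {a b : V}, Relation.ReflTransGen R' a b →
      Relation.ReflTransGen R a b ∨
      (Relation.ReflTransGen R a u ∧ Relation.ReflTransGen R' v b) := by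
  intro a b h
  induction h using Relation.ReflTransGen.head_induction_on with
  | refl => exact Or.inl .refl
  | head hac hcb ih =>
    rcases hsub _ _ hac with h' | ⟨rfl, rfl⟩
    · rcases ih with h'' | ⟨p1, p2⟩
      · exact Or.inl (.head h' h'')
      · exact Or.inr ⟨.head h' p1, p2⟩
    · exact Or.inr ⟨.refl, hcb⟩

private lemma key_path {V : Type*} (E : V → V → Prop) (u₁ v₁ u₂ v₂ : V)
    (hboth : ∃ w, Relation.TransGen
      (fun x y => E x y ∨ (x = u₁ ∧ y = v₁) ∨ (x = u₂ ∧ y = v₂)) w w)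
    (h1 : ∀ w, ¬ Relation.TransGen (fun x y => E x y ∨ (x = u₁ ∧ y = v₁)) w w)
    (h2 : ∀ w, ¬ Relation.TransGen (fun x y => E x y ∨ (x = u₂ ∧ y = v₂)) w w) :
    Relation.ReflTransGen E v₁ u₂ := by
  obtain ⟨w, hw⟩ := hboth
  obtain ⟨c, hwc, hcw⟩ := (Relation.TransGen.head'_iff).mp hw
  have hsub1 : ∀ x y, (E x y ∨ (x = u₁ ∧ y = v₁) ∨ (x = u₂ ∧ y = v₂)) →
      (E x y ∨ (x = u₂ ∧ y = v₂)) ∨ (x = u₁ ∧ y = v₁) := by tauto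
  have A : Relation.ReflTransGen (fun x y => E x y ∨ (x = u₂ ∧ y = v₂)) w u₁ ∧
      Relation.ReflTransGen
        (fun x y => E x y ∨ (x = u₁ ∧ y = v₁) ∨ (x = u₂ ∧ y = v₂)) v₁ w := by
    rcases hsub1 _ _ hwc with h' | ⟨rfl, rfl⟩
    · rcases decomp_edge hsub1 hcw with h'' | ⟨p1, p2⟩
      · exact (h2 w (Relation.TransGen.head' h' h'')).elim
      · exact ⟨.head h' p1, p2⟩
    · exact ⟨.refl, hcw⟩
  have P : Relation.ReflTransGen
      (fun x y => E x y ∨ (x = u₁ ∧ y = v₁) ∨ (x = u₂ ∧ y = v₂)) v₁ u₁ :=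
    A.2.trans (Relation.ReflTransGen.mono (fun _ _ h => by tauto) _ _ A.1)
  have hsub2 : ∀ x y, (E x y ∨ (x = u₁ ∧ y = v₁) ∨ (x = u₂ ∧ y = v₂)) →
      (E x y ∨ (x = u₁ ∧ y = v₁)) ∨ (x = u₂ ∧ y = v₂) := by tauto
  rcases decomp_edge hsub2 P with h' | ⟨p1, _⟩
  · exact (h1 u₁ (Relation.TransGen.head' (Or.inr ⟨rfl, rfl⟩) h')).elim
  · have hsub3 : ∀ x y, (E x y ∨ (x = u₁ ∧ y = v₁)) →
        E x y ∨ (x = u₁ ∧ y = v₁) := fun _ _ h => h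
    rcases decomp_edge hsub3 p1 with h'' | ⟨q1, _⟩
    · exact h''
    · exact (h1 u₁ (Relation.TransGen.head' (Or.inr ⟨rfl, rfl⟩)
        (Relation.ReflTransGen.mono (fun _ _ h => Or.inl h) _ _ q1))).elim

theorem false_positive_paths {V : Type*} (E : V → V → Prop) (u₁ v₁ u₂ v₂ : V)
    (hacyc : ∀ w, ¬ Relation.TransGen E w w)
    (hboth : ∃ w, Relation.TransGen
      (fun x y => E x y ∨ (x = u₁ ∧ y = v₁) ∨ (x = u₂ ∧ y = v₂)) w w)
    (h1 : ∀ w, ¬ Relation.TransGen (fun x y => E x y ∨ (x = u₁ ∧ y = v₁)) w w)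
    (h2 : ∀ w, ¬ Relation.TransGen (fun x y => E x y ∨ (x = u₂ ∧ y = v₂)) w w) :
    Relation.ReflTransGen E v₁ u₂ ∧ Relation.ReflTransGen E v₂ u₁ := by
  have hboth' : ∃ w, Relation.TransGen
      (fun x y => E x y ∨ (x = u₂ ∧ y = v₂) ∨ (x = u₁ ∧ y = v₁)) w w :=
    hboth.imp fun w hw => Relation.TransGen.mono (fun _ _ h => by tauto) _ _ hw
  exact ⟨key_path E u₁ v₁ u₂ v₂ hboth h1 h2, key_path E u₂ v₂ u₁ v₁ hboth' h2 h1⟩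
end

section
/- If a relation E' extends a relation E by exactly one pair (u,v), and the transitive closure of E' relates some vertex w to itself while the transitive closure of E is irreflexive, then the transitive closure of E' relates v to u via a chain whose first step can be taken in E ∪ {(u,v)}, and in fact ReflTransGen E v u holds. -/
theorem new_cycle_decomposition {V : Type*} (E E' : V → V → Prop) (u v : V)
    (hE' : ∀ x y, E' x y ↔ (E x y ∨ (x = u ∧ y = v)))
    (hacyc : ∀ w, ¬ Relation.TransGen E w w)
    (hcyc : ∃ w, Relation.TransGen E' w w) :
    Relation.ReflTransGen E v u := by
  obtain ⟨w, hw⟩ := hcyc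
  have key : ∀ x y, Relation.TransGen E' x y →
      Relation.TransGen E x y ∨
        (Relation.ReflTransGen E x u ∧ Relation.ReflTransGen E v y) := by
    intro x y h
    induction h with
    | single h =>
      rcases (hE' _ _).1 h with h | ⟨rfl, rfl⟩
      · exact Or.inl (Relation.TransGen.single h)
      · exact Or.inr ⟨Relation.ReflTransGen.refl, Relation.ReflTransGen.refl⟩
    | tail h hstep ih =>
      rcases (hE' _ _).1 hstep with h' | ⟨rfl, rfl⟩
      · rcases ih with ih | ⟨h1, h2⟩
        · exact Or.inl (ih.tail h')
        · exact Or.inr ⟨h1, h2.tail h'⟩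
      · rcases ih with ih | ⟨h1, h2⟩
        · exact Or.inr ⟨ih.to_reflTransGen, Relation.ReflTransGen.refl⟩
        · exact Or.inr ⟨h1, Relation.ReflTransGen.refl⟩
  rcases key w w hw with h | ⟨h1, h2⟩
  · exact absurd h (hacyc w)
  · exact h2.trans h1
end
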